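/- With F = M × X and operation (a,i)*(b,j) = ((1−t)·a + t·b + e_i − e_j, j) as above, the quandle F is generated by the set {(0,i) : i ∈ X}, and distinct generators (0,i), (0,j) with i ≠ j lie in distinct orbits of the displacement group. -/

import Mathlib

open LaurentPolynomial

/-- The standard basis vectors `e_i` of `⊕_{x ∈ X∖{z}} ℤ[t,t⁻¹]`, with `e_z = 0`. -/
noncomputable def freeMQ.e {X : Type*} [DecidableEq X] (z : X) (i : X) :
    {x : X // x ≠ z} →₀ LaurentPolynomial ℤ :=
  if h : i = z then 0 else Finsupp.single ⟨i, h⟩ 1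

/-- The operation `(a,i) * (b,j) = ((1-t)·a + t·b + e_i - e_j, j)` on `M × X`. -/
noncomputable def freeMQ.op {X : Type*} [DecidableEq X] (z : X)
    (p q : ({x : X // x ≠ z} →₀ LaurentPolynomial ℤ) × X) :
    ({x : X // x ≠ z} →₀ LaurentPolynomial ℤ) × X :=
  (((1 - T 1 : LaurentPolynomial ℤ)) • p.1 + (T 1 : LaurentPolynomial ℤ) • q.1 + freeMQ.e z p.2 - freeMQ.e z q.2, q.2)

/-- The left division `(a,i) \ (b,j) = ((1-t⁻¹)·a + t⁻¹·(b + e_j - e_i), j)` on `M × X`. -/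
noncomputable def freeMQ.ld {X : Type*} [DecidableEq X] (z : X)
    (p q : ({x : X // x ≠ z} →₀ LaurentPolynomial ℤ) × X) :
    ({x : X // x ≠ z} →₀ LaurentPolynomial ℤ) × X :=
  (((1 - T (-1) : LaurentPolynomial ℤ)) • p.1 + (T (-1) : LaurentPolynomial ℤ) • (q.1 + freeMQ.e z q.2 - freeMQ.e z p.2), q.2)

section Aux

variable {X : Type*} [DecidableEq X] (z : X)

private lemma freeMQ.e_z : freeMQ.e z z = 0 := by simp [freeMQ.e]

private lemma Tsmul (m n : ℤ) (a : {x : X // x ≠ z} →₀ LaurentPolynomial ℤ) :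
    (T m : LaurentPolynomial ℤ) • (T n : LaurentPolynomial ℤ) • a
      = (T (m + n) : LaurentPolynomial ℤ) • a := by
  rw [smul_smul, ← T_add]

private lemma key1 (m : ℤ) (a u v : {x : X // x ≠ z} →₀ LaurentPolynomial ℤ) :
    (T m : LaurentPolynomial ℤ) •
        ((1 - T 1 : LaurentPolynomial ℤ) • (0 : {x : X // x ≠ z} →₀ LaurentPolynomial ℤ)
          + (T 1 : LaurentPolynomial ℤ) • ((T (-(m + 1)) : LaurentPolynomial ℤ) • a) + u - v)
      = a + (T m : LaurentPolynomial ℤ) • (u - v) := by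
  rw [smul_zero, zero_add, Tsmul, smul_sub, smul_add, Tsmul]
  have h : m + (1 + -(m + 1)) = 0 := by ring
  rw [h, T_zero, one_smul, smul_sub]
  abel

private lemma key2 (m : ℤ) (a u v : {x : X // x ≠ z} →₀ LaurentPolynomial ℤ) :
    (T (m + 1) : LaurentPolynomial ℤ) •
        ((1 - T (-1) : LaurentPolynomial ℤ) • (0 : {x : X // x ≠ z} →₀ LaurentPolynomial ℤ)
          + (T (-1) : LaurentPolynomial ℤ) • ((T (-m) : LaurentPolynomial ℤ) • a + u - v))
      = a + (T m : LaurentPolynomial ℤ) • (u - v) := by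
  rw [smul_zero, zero_add, Tsmul]
  have h : m + 1 + -1 = m := by ring
  rw [h, smul_sub, smul_add, Tsmul]
  have h2 : m + -m = 0 := by ring
  rw [h2, T_zero, one_smul, smul_sub]
  abel

private lemma freeMQ_gen (S : Set (({x : X // x ≠ z} →₀ LaurentPolynomial ℤ) × X))
    (hgen : ∀ i : X, ((0 : {x : X // x ≠ z} →₀ LaurentPolynomial ℤ), i) ∈ S)
    (hcl : ∀ p q, p ∈ S → q ∈ S → freeMQ.op z p q ∈ S ∧ freeMQ.ld z p q ∈ S) :
    ∀ p, p ∈ S := by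
  rintro ⟨a, j⟩
  -- scaling by T m preserves membership
  have step1 : ∀ a : {x : X // x ≠ z} →₀ LaurentPolynomial ℤ, (a, j) ∈ S →
      ((T 1 : LaurentPolynomial ℤ) • a, j) ∈ S := by
    intro a ha
    have h := (hcl (0, j) (a, j) (hgen j) ha).1
    simpa [freeMQ.op] using h
  have step1' : ∀ a : {x : X // x ≠ z} →₀ LaurentPolynomial ℤ, (a, j) ∈ S →
      ((T (-1) : LaurentPolynomial ℤ) • a, j) ∈ S := by
    intro a ha
    have h := (hcl (0, j) (a, j) (hgen j) ha).2
    simpa [freeMQ.ld] using h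
  have scaleT : ∀ (m : ℤ) (a : {x : X // x ≠ z} →₀ LaurentPolynomial ℤ), (a, j) ∈ S →
      ((T m : LaurentPolynomial ℤ) • a, j) ∈ S := by
    intro m
    induction m using Int.induction_on with
    | zero => intro a ha; simpa [T_zero] using ha
    | succ k ih =>
        intro a ha
        have h := step1 _ (ih a ha)
        rw [Tsmul] at h
        have e : (1 : ℤ) + (k : ℤ) = (k : ℤ) + 1 := by ring
        rwa [e] at h
    | pred k ih =>
        intro a ha
        have h := step1' _ (ih a ha)
        rw [Tsmul] at h
        have e : (-1 : ℤ) + -(k : ℤ) = -(k : ℤ) - 1 := by ring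
        rwa [e] at h
  -- adding T m • (e i - e j)
  have addP : ∀ (m : ℤ) (i : X) (a : {x : X // x ≠ z} →₀ LaurentPolynomial ℤ), (a, j) ∈ S →
      (a + (T m : LaurentPolynomial ℤ) • (freeMQ.e z i - freeMQ.e z j), j) ∈ S := by
    intro m i a ha
    have hb := scaleT (-(m + 1)) a ha
    have h := (hcl (0, i) ((T (-(m + 1)) : LaurentPolynomial ℤ) • a, j) (hgen i) hb).1
    unfold freeMQ.op at h
    have h2 := scaleT m _ h
    rw [key1] at h2
    exact h2
  -- adding T m • (e j - e i)
  have addN : ∀ (m : ℤ) (i : X) (a : {x : X // x ≠ z} →₀ LaurentPolynomial ℤ), (a, j) ∈ S →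
      (a + (T m : LaurentPolynomial ℤ) • (freeMQ.e z j - freeMQ.e z i), j) ∈ S := by
    intro m i a ha
    have hb := scaleT (-m) a ha
    have h := (hcl (0, i) ((T (-m) : LaurentPolynomial ℤ) • a, j) (hgen i) hb).2
    unfold freeMQ.ld at h
    have h2 := scaleT (m + 1) _ h
    rw [key2] at h2
    exact h2
  -- adding and subtracting T m • e i
  have addE : ∀ (m : ℤ) (i : X) (a : {x : X // x ≠ z} →₀ LaurentPolynomial ℤ), (a, j) ∈ S →
      (a + (T m : LaurentPolynomial ℤ) • freeMQ.e z i, j) ∈ S := by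
    intro m i a ha
    have h2 := addN m z _ (addP m i a ha)
    rw [freeMQ.e_z] at h2
    have e : a + (T m : LaurentPolynomial ℤ) • (freeMQ.e z i - freeMQ.e z j)
          + (T m : LaurentPolynomial ℤ) • (freeMQ.e z j - 0)
        = a + (T m : LaurentPolynomial ℤ) • freeMQ.e z i := by
      rw [sub_zero, smul_sub]; abel
    rwa [e] at h2
  have subE : ∀ (m : ℤ) (i : X) (a : {x : X // x ≠ z} →₀ LaurentPolynomial ℤ), (a, j) ∈ S →
      (a - (T m : LaurentPolynomial ℤ) • freeMQ.e z i, j) ∈ S := by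
    intro m i a ha
    have h2 := addP m z _ (addN m i a ha)
    rw [freeMQ.e_z] at h2
    have e : a + (T m : LaurentPolynomial ℤ) • (freeMQ.e z j - freeMQ.e z i)
          + (T m : LaurentPolynomial ℤ) • (0 - freeMQ.e z j)
        = a - (T m : LaurentPolynomial ℤ) • freeMQ.e z i := by
      rw [zero_sub, smul_sub, smul_neg]; abel
    rwa [e] at h2
  -- adding n • (T m • e i)
  have addZ : ∀ (n m : ℤ) (i : X) (a : {x : X // x ≠ z} →₀ LaurentPolynomial ℤ), (a, j) ∈ S →
      (a + n • ((T m : LaurentPolynomial ℤ) • freeMQ.e z i), j) ∈ S := by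
    intro n
    induction n using Int.induction_on with
    | zero => intro m i a ha; simpa using ha
    | succ k ih =>
        intro m i a ha
        have h := addE m i _ (ih m i a ha)
        have e : a + (k : ℤ) • ((T m : LaurentPolynomial ℤ) • freeMQ.e z i)
              + (T m : LaurentPolynomial ℤ) • freeMQ.e z i
            = a + ((k : ℤ) + 1) • ((T m : LaurentPolynomial ℤ) • freeMQ.e z i) := by
          rw [add_smul, one_smul, add_assoc]
        rwa [e] at h
    | pred k ih =>
        intro m i a ha
        have h := subE m i _ (ih m i a ha)
        have e : a + (-(k : ℤ)) • ((T m : LaurentPolynomial ℤ) • freeMQ.e z i)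
              - (T m : LaurentPolynomial ℤ) • freeMQ.e z i
            = a + (-(k : ℤ) - 1) • ((T m : LaurentPolynomial ℤ) • freeMQ.e z i) := by
          rw [sub_smul, one_smul, add_sub_assoc]
        rwa [e] at h
  -- adding p • e i for any Laurent polynomial p
  have addSingle : ∀ (p : LaurentPolynomial ℤ) (i : X)
      (a : {x : X // x ≠ z} →₀ LaurentPolynomial ℤ), (a, j) ∈ S →
      (a + p • freeMQ.e z i, j) ∈ S := by
    intro p
    induction p using LaurentPolynomial.induction_on' with
    | add p q hp hq =>
        intro i a ha
        have h := hq i _ (hp i a ha)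
        rwa [add_assoc, ← add_smul] at h
    | C_mul_T n c =>
        intro i a ha
        have h := addZ c n i a ha
        have e : (c : ℤ) • ((T n : LaurentPolynomial ℤ) • freeMQ.e z i)
            = (C c * T n : LaurentPolynomial ℤ) • freeMQ.e z i := by
          rw [mul_smul, eq_intCast (C : ℤ →+* LaurentPolynomial ℤ) c,
            Int.cast_smul_eq_zsmul (LaurentPolynomial ℤ)]
        rwa [e] at h
  -- conclude by Finsupp induction
  induction a using Finsupp.induction with
  | zero => exact hgen j
  | single_add x v f hx hv ih =>
      have h := addSingle v x.1 f ih
      have e : f + v • freeMQ.e z x.1 = Finsupp.single x v + f := by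
        have hex : freeMQ.e z x.1 = Finsupp.single x 1 := by
          rw [freeMQ.e, dif_neg x.2]
        rw [hex, Finsupp.smul_single, smul_eq_mul, mul_one, add_comm]
      rwa [e] at h

/-- Permutations fixing the second coordinate form a subgroup. -/
private def secondFix (X : Type*) [DecidableEq X] (z : X) :
    Subgroup (Equiv.Perm (({x : X // x ≠ z} →₀ LaurentPolynomial ℤ) × X)) where
  carrier := {g | ∀ p, (g p).2 = p.2}
  one_mem' := fun _ => rfl
  mul_mem' := by
    intro g h hg hh p
    have := hg (h p)
    simpa [hh p] using this
  inv_mem' := by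
    intro g hg p
    have := hg (g⁻¹ p)
    simpa using this.symm

end Aux

/-- `F = M × X` is generated as a quandle by `{(0,i) : i ∈ X}`, and distinct
generators lie in distinct orbits of the displacement group. -/
theorem freeMQ_generated_and_orbits {X : Type*} [DecidableEq X] (z : X) :
    (∀ S : Set (({x : X // x ≠ z} →₀ LaurentPolynomial ℤ) × X),
      (∀ i : X, ((0 : {x : X // x ≠ z} →₀ LaurentPolynomial ℤ), i) ∈ S) →
      (∀ p q, p ∈ S → q ∈ S → freeMQ.op z p q ∈ S ∧ freeMQ.ld z p q ∈ S) →
      ∀ p, p ∈ S) ∧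
    (∀ i j : X, i ≠ j →
      ∀ g ∈ Subgroup.closure {h : Equiv.Perm (({x : X // x ≠ z} →₀ LaurentPolynomial ℤ) × X) |
          ∃ u v, ∀ p, h p = freeMQ.op z u (freeMQ.ld z v p)},
        g ((0 : {x : X // x ≠ z} →₀ LaurentPolynomial ℤ), i) ≠
          ((0 : {x : X // x ≠ z} →₀ LaurentPolynomial ℤ), j)) := by
  constructor
  · exact fun S hgen hcl => freeMQ_gen z S hgen hcl
  · intro i j hij g hg hgij
    have hle : Subgroup.closure {h : Equiv.Perm (({x : X // x ≠ z} →₀ LaurentPolynomial ℤ) × X) |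
          ∃ u v, ∀ p, h p = freeMQ.op z u (freeMQ.ld z v p)} ≤ secondFix X z := by
      rw [Subgroup.closure_le]
      rintro h ⟨u, v, hh⟩ p
      rw [hh p]
      rfl
    have h2 := hle hg ((0 : {x : X // x ≠ z} →₀ LaurentPolynomial ℤ), i)
    rw [hgij] at h2
    exact hij h2.symm
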